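/- Let g(x) = -(2/3)x + Ω(1/x, 0) + Ω(1/x, 1/(2x)) for x > 0, where Ω(x,y) = ∑_{n∈ℤ} max(0, 1 - |n·x - y|)². Then g achieves a unique global minimum at x = Λ, the unique root of 2X³ - 6X + 3 in (1/2, 1), and the minimum value g(Λ) is a root of the polynomial 6X³ - 42X² + 54X - 19. -/

import Mathlib

/-- `Ω(x,y) = ∑_{n∈ℤ} max(0, 1 - |n·x - y|)²`. -/
noncomputable def Omega (x y : ℝ) : ℝ := ∑' n : ℤ, (max 0 (1 - |(n : ℝ) * x - y|)) ^ 2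

/-- `g(x) = -(2/3)x + Ω(1/x, 0) + Ω(1/x, 1/(2x))` for `x > 0`. -/
noncomputable def g (x : ℝ) : ℝ :=
  -(2 / 3) * x + Omega (1 / x) 0 + Omega (1 / x) (1 / (2 * x))

open Finset

/-- Auxiliary: `q t k = max(0, 1 - k/(2t))²`. -/
noncomputable def q (t k : ℝ) : ℝ := (max 0 (1 - k / (2 * t))) ^ 2

private lemma q_zero (t k : ℝ) (ht : 0 < t) (h : 2 * t ≤ k) : q t k = 0 := by
  unfold q
  have h1 : 1 - k / (2*t) ≤ 0 := by
    rw [sub_nonpos, le_div_iff₀ (by linarith)]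
    linarith
  rw [max_eq_left h1]; ring

private lemma omega0 (t : ℝ) (ht : 0 < t) (L : ℕ) (hL : t ≤ L) :
    Omega (1/t) 0 = 1 + 2 * ∑ j ∈ range L, q t (2*(j:ℝ)+2) := by
  set f : ℤ → ℝ := fun n => (max 0 (1 - |(n:ℝ) * (1/t) - 0|))^2 with hf
  have hzero : ∀ n : ℤ, (L:ℝ) ≤ |(n:ℝ)| → f n = 0 := by
    intro n hn
    have habs : |(n:ℝ) * (1/t) - 0| = |(n:ℝ)| / t := by
      rw [sub_zero, abs_mul, abs_of_pos (by positivity : (0:ℝ) < 1/t), mul_one_div]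
    have h1 : 1 - |(n:ℝ)*(1/t) - 0| ≤ 0 := by
      rw [habs, sub_nonpos, le_div_iff₀ ht, one_mul]
      exact le_trans hL hn
    simp only [hf, max_eq_left h1]
    ring
  have hzpos : ∀ n : ℕ, n ∉ range (L+1) → f n = 0 := by
    intro n hn
    apply hzero
    have h1 : L < n := by simpa using hn
    rw [Int.cast_natCast, Nat.abs_cast]
    exact_mod_cast h1.le
  have hzneg : ∀ n : ℕ, n ∉ range L → f (-(n+1)) = 0 := by
    intro n hn
    apply hzero
    have h1 : L ≤ n := by simpa using hn
    have : ((-(n+1) : ℤ) : ℝ) = -((n:ℝ)+1) := by push_cast; ring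
    rw [this, abs_neg, abs_of_nonneg (by positivity)]
    have : (L:ℝ) ≤ n := by exact_mod_cast h1
    linarith
  have hs1 : Summable (fun n : ℕ => f n) := summable_of_ne_finset_zero hzpos
  have hs2 : Summable (fun n : ℕ => f (-(n+1))) := summable_of_ne_finset_zero hzneg
  have hO : Omega (1/t) 0 = (∑' n : ℕ, f n) + ∑' n : ℕ, f (-(n+1)) :=
    tsum_of_nat_of_neg_add_one hs1 hs2
  rw [hO, tsum_eq_sum hzpos, tsum_eq_sum hzneg]
  have hneg : ∀ n : ℕ, f (-(n+1)) = f ((n:ℤ)+1) := by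
    intro n
    simp only [hf]
    congr 1
    congr 1
    congr 1
    push_cast
    rw [sub_zero, sub_zero, neg_mul, abs_neg]
  have hq : ∀ n : ℕ, f ((n:ℤ)+1) = q t (2*(n:ℝ)+2) := by
    intro n
    simp only [hf, q]
    congr 2
    push_cast
    rw [sub_zero, abs_of_nonneg (by positivity)]
    rw [mul_one_div]
    field_simp
  have hsplit : ∑ n ∈ range (L+1), f n = f 0 + ∑ n ∈ range L, f ((n:ℤ)+1) := by
    rw [Finset.sum_range_succ']
    push_cast
    ring
  have hf0 : f 0 = 1 := by simp [hf]
  rw [hsplit, hf0]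
  rw [Finset.sum_congr rfl (fun n _ => hneg n), Finset.sum_congr rfl (fun n _ => hq n)]
  ring

private lemma omega_half (t : ℝ) (ht : 0 < t) (L : ℕ) (hL : t ≤ L) :
    Omega (1/t) (1/(2*t)) = 2 * ∑ j ∈ range L, q t (2*(j:ℝ)+1) := by
  set f : ℤ → ℝ := fun n => (max 0 (1 - |(n:ℝ) * (1/t) - 1/(2*t)|))^2 with hf
  have habs : ∀ n : ℤ, |(n:ℝ) * (1/t) - 1/(2*t)| = |2*(n:ℝ) - 1| / (2*t) := by
    intro n
    have h1 : (n:ℝ) * (1/t) - 1/(2*t) = (2*(n:ℝ)-1)/(2*t) := by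
      field_simp
    rw [h1, abs_div, abs_of_pos (show (0:ℝ) < 2*t by linarith)]
  have hfq : ∀ n : ℤ, f n = q t |2*(n:ℝ) - 1| := by
    intro n
    simp only [hf, q, habs n]
  have hzero : ∀ n : ℤ, 2*t ≤ |2*(n:ℝ) - 1| → f n = 0 := by
    intro n hn
    rw [hfq n]
    exact q_zero t _ ht hn
  have hzpos : ∀ n : ℕ, n ∉ range (L+1) → f n = 0 := by
    intro n hn
    apply hzero
    have h1 : L < n := by simpa using hn
    have h1' : (L:ℝ) + 1 ≤ n := by exact_mod_cast h1
    have h0L : (0:ℝ) ≤ L := Nat.cast_nonneg L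
    rw [Int.cast_natCast, abs_of_nonneg (by linarith : (0:ℝ) ≤ 2*(n:ℝ)-1)]
    linarith
  have hzneg : ∀ n : ℕ, n ∉ range L → f (-(n+1)) = 0 := by
    intro n hn
    apply hzero
    have h1 : L ≤ n := by simpa using hn
    have h1' : (L:ℝ) ≤ n := by exact_mod_cast h1
    have hc : ((-(n+1) : ℤ) : ℝ) = -((n:ℝ)+1) := by push_cast; ring
    rw [hc]
    have : 2 * -((n:ℝ)+1) - 1 = -(2*(n:ℝ)+3) := by ring
    rw [this, abs_neg, abs_of_nonneg (by positivity)]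
    linarith
  have hs1 : Summable (fun n : ℕ => f n) := summable_of_ne_finset_zero hzpos
  have hs2 : Summable (fun n : ℕ => f (-(n+1))) := summable_of_ne_finset_zero hzneg
  have hO : Omega (1/t) (1/(2*t)) = (∑' n : ℕ, f n) + ∑' n : ℕ, f (-(n+1)) :=
    tsum_of_nat_of_neg_add_one hs1 hs2
  rw [hO, tsum_eq_sum hzpos, tsum_eq_sum hzneg]
  have hpos_term : ∀ n : ℕ, f ((n:ℤ)+1) = q t (2*(n:ℝ)+1) := by
    intro n
    rw [hfq]
    congr 1
    push_cast
    have h0n : (0:ℝ) ≤ n := Nat.cast_nonneg n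
    rw [abs_of_nonneg (by linarith : (0:ℝ) ≤ 2*((n:ℝ)+1)-1)]
    ring
  have hf0 : f 0 = q t 1 := by
    rw [hfq]
    norm_num
  have hpos : ∑ n ∈ range (L+1), f n = q t 1 + ∑ n ∈ range L, q t (2*(n:ℝ)+1) := by
    rw [Finset.sum_range_succ']
    push_cast
    rw [Finset.sum_congr rfl (fun n _ => hpos_term n), hf0]
    ring
  have hneg_term : ∀ n : ℕ, f (-(n+1)) = q t (2*(n:ℝ)+3) := by
    intro n
    rw [hfq]
    congr 1
    push_cast
    have : 2 * -((n:ℝ)+1) - 1 = -(2*(n:ℝ)+3) := by ring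
    rw [this, abs_neg, abs_of_nonneg (by positivity)]
  have hshift : ∑ n ∈ range (L+1), q t (2*(n:ℝ)+1)
      = (∑ n ∈ range L, q t (2*(n:ℝ)+3)) + q t 1 := by
    rw [Finset.sum_range_succ']
    push_cast
    norm_num
    apply Finset.sum_congr rfl
    intro n _
    congr 1
    ring
  have htop : ∑ n ∈ range (L+1), q t (2*(n:ℝ)+1)
      = ∑ n ∈ range L, q t (2*(n:ℝ)+1) + q t (2*(L:ℝ)+1) := by
    rw [Finset.sum_range_succ]
  have hqL : q t (2*(L:ℝ)+1) = 0 := q_zero t _ ht (by linarith)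
  rw [hpos, Finset.sum_congr rfl (fun n _ => hneg_term n)]
  have hnegsum : ∑ n ∈ range L, q t (2*(n:ℝ)+3)
      = ∑ n ∈ range L, q t (2*(n:ℝ)+1) - q t 1 := by
    have := hshift
    rw [htop, hqL] at this
    linarith
  rw [hnegsum]
  ring

private lemma pair_sum (a : ℕ → ℝ) (L : ℕ) :
    ∑ k ∈ range (2*L), a k = ∑ j ∈ range L, (a (2*j) + a (2*j+1)) := by
  induction L with
  | zero => simp
  | succ n ih =>
    have h2 : 2*(n+1) = (2*n+1)+1 := by ring
    rw [h2, sum_range_succ, sum_range_succ, sum_range_succ, ih]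
    ring

private lemma g_eq (t : ℝ) (ht : 0 < t) (L : ℕ) (hL : t ≤ L) :
    g t = 1 - 2/3*t + 2 * ∑ k ∈ range (2*L), q t ((k:ℝ)+1) := by
  rw [g, omega0 t ht L hL, omega_half t ht L hL,
      pair_sum (fun k => q t ((k:ℝ)+1)) L]
  have hterm : ∀ j : ℕ, (fun k : ℕ => q t ((k:ℝ)+1)) (2*j) + (fun k : ℕ => q t ((k:ℝ)+1)) (2*j+1)
       = q t (2*(j:ℝ)+1) + q t (2*(j:ℝ)+2) := by
    intro j
    simp only
    push_cast
    ring_nf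
  rw [Finset.sum_congr rfl (fun j _ => hterm j), Finset.sum_add_distrib]
  ring

private lemma g_small (x : ℝ) (h1 : 0 < x) (h2 : x ≤ 1) :
    g x = 1 - 2/3*x + 2 * (max 0 (1 - 1/(2*x)))^2 := by
  have := g_eq x h1 1 (by exact_mod_cast h2)
  rw [this]
  norm_num [Finset.sum_range_succ]
  rw [q_zero x 2 h1 (by linarith), q]
  norm_num

private lemma g_mid (x : ℝ) (h1 : 1/2 < x) (h2 : x ≤ 1) :
    g x = 1 - 2/3*x + (2*x-1)^2/(2*x^2) := by
  rw [g_small x (by linarith) h2]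
  rw [max_eq_right (by rw [sub_nonneg, div_le_one (by linarith)]; linarith)]
  have hx : x ≠ 0 := by linarith
  field_simp

private lemma sum_sq_closed (s : ℝ) (hs : s ≠ 0) (N : ℕ) :
    ∑ k ∈ range N, (1 - ((k:ℝ)+1)/s)^2
      = N - N*(N+1)/s + N*(N+1)*(2*N+1)/(6*s^2) := by
  induction N with
  | zero => simp
  | succ n ih =>
    rw [sum_range_succ, ih]
    push_cast
    field_simp
    ring

private lemma g_large (t : ℝ) (ht : 1 < t) : 2/3 < g t := by
  have ht0 : 0 < t := by linarith
  set L := ⌈t⌉₊ with hLdef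
  have hL : t ≤ L := Nat.le_ceil t
  set N := ⌊2*t⌋₊ with hNdef
  have hN1 : (N:ℝ) ≤ 2*t := Nat.floor_le (by positivity)
  have hN2 : 2*t < N+1 := Nat.lt_floor_add_one _
  have hNL : N ≤ 2*L := by
    have h2L : (N:ℝ) ≤ ((2*L : ℕ) : ℝ) := by push_cast; linarith
    exact_mod_cast h2L
  rw [g_eq t ht0 L hL]
  have htrunc : ∑ k ∈ range (2*L), q t ((k:ℝ)+1) = ∑ k ∈ range N, q t ((k:ℝ)+1) := by
    symm
    apply Finset.sum_subset (range_subset_range.mpr hNL)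
    intro k _ hk'
    have hkN : N ≤ k := by simpa using hk'
    have hkN' : (N:ℝ) ≤ k := by exact_mod_cast hkN
    exact q_zero t _ ht0 (by linarith)
  have hres : ∑ k ∈ range N, q t ((k:ℝ)+1) = ∑ k ∈ range N, (1 - ((k:ℝ)+1)/(2*t))^2 := by
    apply Finset.sum_congr rfl
    intro k hk
    have hkN : k < N := mem_range.mp hk
    have hkN' : (k:ℝ)+1 ≤ N := by exact_mod_cast hkN
    unfold q
    rw [max_eq_right (by rw [sub_nonneg, div_le_one (by linarith)]; linarith)]
  rw [htrunc, hres, sum_sq_closed (2*t) (by positivity) N]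
  set n : ℝ := (N:ℝ) with hn
  have hQ : 0 < 6*n*(2*t)^2 - 6*n*(n+1)*(2*t) + n*(n+1)*(2*n+1) - (2*t)^3 + (2*t)^2 := by
    have h2 : 2 ≤ 2*t := by linarith
    nlinarith [mul_nonneg (sub_nonneg.mpr hN1) (by linarith : (0:ℝ) ≤ n + 1 - 2*t),
      sq_nonneg (2*t - n), sq_nonneg (n + 1 - 2*t), sq_nonneg (2*t-2),
      mul_nonneg (sub_nonneg.mpr h2) (sq_nonneg (2*t-1))]
  have hexp : 1 - 2/3*t + 2*(n - n*(n+1)/(2*t) + n*(n+1)*(2*n+1)/(6*(2*t)^2)) - 2/3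
      = (6*n*(2*t)^2 - 6*n*(n+1)*(2*t) + n*(n+1)*(2*n+1) - (2*t)^3 + (2*t)^2)/(3*(2*t)^2) := by
    field_simp
    ring
  have hpos : 0 < (6*n*(2*t)^2 - 6*n*(n+1)*(2*t) + n*(n+1)*(2*n+1) - (2*t)^3 + (2*t)^2)/(3*(2*t)^2) :=
    div_pos hQ (by positivity)
  linarith [hexp ▸ hpos]

/-- `g` achieves a unique global minimum (over `x > 0`) at `x = Λ`, the unique root of
`2X³ - 6X + 3` in `(1/2, 1)`, and the minimum value `g(Λ)` is a root of
`6X³ - 42X² + 54X - 19`. -/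
theorem stmt_11 (Λ : ℝ) (hΛroot : 2 * Λ ^ 3 - 6 * Λ + 3 = 0)
    (hΛ1 : 1 / 2 < Λ) (hΛ2 : Λ < 1)
    (huniq : ∀ y : ℝ, 1 / 2 < y → y < 1 → 2 * y ^ 3 - 6 * y + 3 = 0 → y = Λ) :
    (∀ x : ℝ, 0 < x → x ≠ Λ → g Λ < g x) ∧
    6 * (g Λ) ^ 3 - 42 * (g Λ) ^ 2 + 54 * (g Λ) - 19 = 0 := by
  have hΛ0 : (0:ℝ) < Λ := by linarith
  have hΛne : Λ ≠ 0 := ne_of_gt hΛ0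
  have hgΛ : g Λ = (6*Λ^2 - 8*Λ + 3)/(2*Λ^2) := by
    rw [g_mid Λ hΛ1 hΛ2.le]
    field_simp
    linear_combination (-2) * hΛroot
  have hub : Λ < 0.56 := by
    nlinarith [hΛroot, mul_pos (sub_pos.mpr hΛ1) (sub_pos.mpr hΛ2), sq_nonneg (Λ - 1)]
  have hlb : 0.555 < Λ := by
    nlinarith [hΛroot, mul_pos (sub_pos.mpr hΛ1) (sub_pos.mpr hΛ2), sq_nonneg (Λ - 1)]
  have hgΛlt : g Λ < 2/3 := by
    rw [hgΛ, div_lt_div_iff₀ (by positivity) (by norm_num)]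
    nlinarith [mul_pos (sub_pos.mpr hlb) (sub_pos.mpr hΛ2)]
  constructor
  · intro x hx0 hxΛ
    rcases le_or_gt x (1/2) with hx | hx
    · have hgx : g x = 1 - 2/3*x := by
        rw [g_small x hx0 (by linarith)]
        have hmax : 1 - 1/(2*x) ≤ 0 := by
          rw [sub_nonpos, le_div_iff₀ (by linarith)]
          linarith
        rw [max_eq_left hmax]
        ring
      rw [hgx]
      linarith
    · rcases le_or_gt x 1 with hx1 | hx1
      · have key : g x - g Λ = (x-Λ)^2 * (3 - 4*Λ^2*x) / (6*x^2*Λ^2) := by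
          rw [g_mid x hx hx1, hgΛ]
          field_simp
          ring_nf
          linear_combination (12*x*Λ - 24*x^2) * hΛroot
        have hpos : 0 < (x-Λ)^2 * (3 - 4*Λ^2*x) / (6*x^2*Λ^2) := by
          apply div_pos
          · apply mul_pos
            · exact sq_pos_of_ne_zero (sub_ne_zero.mpr hxΛ)
            · nlinarith [sq_nonneg (Λ - 0.56)]
          · positivity
        linarith
      · have := g_large x hx1
        linarith
  · rw [hgΛ]
    field_simp
    linear_combination ((-292)*Λ^3 + (576)*Λ^2 + (-324)*Λ^1 + (54)*Λ^0) * hΛroot
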